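/- For n = 3 one has f(1) = 3, f(2) = 5, and for every k ≥ 1 the recurrence f(k+2) = f(k+1) + f(k) holds. -/

import Mathlib

/-- The relation "to be in composition" on `{1,…,n}`: the composition
`∇_j ∘ ∇_i` is meaningful iff `j = i + 1` or `i + j = n + 1`. -/
def rho (n i j : ℕ) : Prop := j = i + 1 ∨ i + j = n + 1

instance (n i j : ℕ) : Decidable (rho n i j) := by unfold rho; infer_instance

/-- A `k`-tuple `(i₁,…,i_k) ∈ {1,…,n}^k` (encoded as `g : Fin k → Fin n`, where
`i_t = (g (t-1) : ℕ) + 1`) is a meaningful composition iff every pair of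
consecutive entries is related by `rho`. -/
def Meaningful (n k : ℕ) (g : Fin k → Fin n) : Prop :=
  ∀ t : Fin (k - 1),
    rho n (((g ⟨t, lt_of_lt_of_le t.2 (Nat.sub_le k 1)⟩ : Fin n) : ℕ) + 1)
          (((g ⟨(t : ℕ) + 1, Nat.add_lt_of_lt_sub t.2⟩ : Fin n) : ℕ) + 1)

instance (n k : ℕ) (g : Fin k → Fin n) : Decidable (Meaningful n k g) := by
  unfold Meaningful; infer_instance

/-- `numComp n k` is the number of meaningful compositions of order `k` on `ℝⁿ`. -/
def numComp (n k : ℕ) : ℕ := Fintype.card {g : Fin k → Fin n // Meaningful n k g}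

lemma meaningful_iff (m : ℕ) (g : Fin (m+1) → Fin 3) :
    Meaningful 3 (m+1) g ↔ ∀ t : Fin m, rho 3 ((g t.castSucc : ℕ)+1) ((g t.succ : ℕ)+1) :=
  Iff.rfl

lemma meaningful_snoc (m : ℕ) (g : Fin (m+1) → Fin 3) (x : Fin 3) :
    Meaningful 3 (m+2) (Fin.snoc g x) ↔
      Meaningful 3 (m+1) g ∧ rho 3 ((g (Fin.last m) : ℕ)+1) ((x : ℕ)+1) := by
  rw [meaningful_iff]
  constructor
  · intro h
    constructor
    · rw [meaningful_iff]
      intro t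
      have := h t.castSucc
      simpa only [Fin.succ_castSucc, Fin.snoc_castSucc] using this
    · have := h (Fin.last m)
      simpa using this
  · rintro ⟨h1, h2⟩ t
    induction t using Fin.lastCases with
    | last => simpa using h2
    | cast j =>
      have := (meaningful_iff m g).mp h1 j
      simpa only [Fin.succ_castSucc, Fin.snoc_castSucc] using this

lemma meaningful_init (m : ℕ) (h : Fin (m+2) → Fin 3) (hm : Meaningful 3 (m+2) h) :
    Meaningful 3 (m+1) (Fin.init h) := by
  have : h = Fin.snoc (Fin.init h) (h (Fin.last (m+1))) := (Fin.snoc_init_self h).symm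
  rw [this] at hm
  exact ((meaningful_snoc m _ _).mp hm).1

lemma last_det (l : ℕ) (h : Fin (l+2) → Fin 3) (hm : Meaningful 3 (l+2) h)
    (hne : h (Fin.last (l+1)) ≠ 2) :
    h (Fin.last (l+1)) = if h ((Fin.last l).castSucc) = 2 then 0 else 1 := by
  have hr := (meaningful_iff (l+1) h).mp hm (Fin.last l)
  rw [Fin.succ_last] at hr
  simp only [Nat.succ_eq_add_one] at hr
  unfold rho at hr
  have hq : (h (Fin.last (l+1))).val < 3 := (h _).2
  have hp : (h ((Fin.last l).castSucc)).val < 3 := (h _).2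
  have hne' : (h (Fin.last (l+1))).val ≠ 2 := by
    intro hv; exact hne (Fin.ext hv)
  by_cases hc : h ((Fin.last l).castSucc) = 2
  · have hval : (h ((Fin.last l).castSucc)).val = 2 := by rw [hc]; rfl
    simp only [hc, if_pos]
    apply Fin.ext
    simp only [Fin.val_zero]
    omega
  · have hc' : (h ((Fin.last l).castSucc)).val ≠ 2 := by
      intro hv; exact hc (Fin.ext hv)
    simp only [hc, if_neg, if_false]
    apply Fin.ext
    simp only [Fin.val_one]
    omega
abbrev MSeq (m : ℕ) := {g : Fin m → Fin 3 // Meaningful 3 m g}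
abbrev ASeq (m : ℕ) :=
  {g : Fin (m+1) → Fin 3 // Meaningful 3 (m+1) g ∧ g (Fin.last m) ≠ 2}

def phi (l : ℕ) : MSeq (l+1) ≃ ASeq (l+1) where
  toFun g :=
    ⟨Fin.snoc g.1 (if g.1 (Fin.last l) = 2 then 0 else 1), by
      constructor
      · rw [meaningful_snoc]
        refine ⟨g.2, ?_⟩
        by_cases hc : g.1 (Fin.last l) = 2
        · simp only [hc, if_pos]
          right
          rfl
        · have h3 : (g.1 (Fin.last l)).val < 3 := (g.1 _).2
          have hc' : (g.1 (Fin.last l)).val ≠ 2 := fun hv => hc (Fin.ext hv)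
          simp only [hc, if_neg, if_false]
          unfold rho
          simp only [Fin.val_one]
          omega
      · rw [Fin.snoc_last]
        split <;> decide⟩
  invFun h := ⟨Fin.init h.1, meaningful_init l h.1 h.2.1⟩
  left_inv g := by
    apply Subtype.ext
    simp [Fin.init_snoc]
  right_inv h := by
    apply Subtype.ext
    have hd := last_det l h.1 h.2.1 h.2.2
    have hinit : Fin.init h.1 (Fin.last l) = h.1 ((Fin.last l).castSucc) := rfl
    show Fin.snoc (Fin.init h.1) (if Fin.init h.1 (Fin.last l) = 2 then 0 else 1) = h.1
    rw [hinit, ← hd, Fin.snoc_init_self]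

def psi (m : ℕ) : MSeq (m+2) ≃ ASeq (m+1) ⊕ ASeq m where
  toFun g :=
    if hc : g.1 (Fin.last (m+1)) = 2 then
      Sum.inr ⟨Fin.init g.1, meaningful_init m g.1 g.2, by
        intro h2
        have hr := (meaningful_iff (m+1) g.1).mp g.2 (Fin.last m)
        rw [Fin.succ_last] at hr
        simp only [Nat.succ_eq_add_one] at hr
        rw [hc] at hr
        unfold rho at hr
        simp only [show ((2:Fin 3):ℕ) = 2 from rfl] at hr
        have hv : (Fin.init g.1 (Fin.last m)).val = 2 := by rw [h2]; rfl
        have hv2 : (g.1 ((Fin.last m).castSucc)).val = 2 := hv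
        omega⟩
    else Sum.inl ⟨g.1, g.2, hc⟩
  invFun s :=
    match s with
    | Sum.inl h => ⟨h.1, h.2.1⟩
    | Sum.inr h => ⟨Fin.snoc h.1 2, by
        rw [meaningful_snoc]
        refine ⟨h.2.1, ?_⟩
        have h3 : (h.1 (Fin.last m)).val < 3 := (h.1 _).2
        have hc' : (h.1 (Fin.last m)).val ≠ 2 := fun hv => h.2.2 (Fin.ext hv)
        unfold rho
        simp only [show ((2:Fin 3):ℕ) = 2 from rfl]
        omega⟩
  left_inv g := by
    by_cases hc : g.1 (Fin.last (m+1)) = 2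
    · simp only [hc, dif_pos]
      apply Subtype.ext
      conv_rhs => rw [← Fin.snoc_init_self g.1]
      exact congrArg (Fin.snoc (Fin.init g.1)) hc.symm
    · simp [hc]
  right_inv s := by
    match s with
    | Sum.inl h =>
      simp only
      rw [dif_neg h.2.2]
    | Sum.inr h =>
      simp only
      rw [dif_pos (by rw [Fin.snoc_last])]
      congr 1
      apply Subtype.ext
      simp [Fin.init_snoc]

theorem numComp_three_fib_recurrence :
    numComp 3 1 = 3 ∧ numComp 3 2 = 5 ∧
      ∀ k : ℕ, 1 ≤ k → numComp 3 (k + 2) = numComp 3 (k + 1) + numComp 3 k := by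
  refine ⟨by decide, by decide, ?_⟩
  intro k hk
  obtain ⟨l, rfl⟩ := Nat.exists_eq_add_of_le' hk
  calc numComp 3 (l + 1 + 2)
      = Fintype.card (ASeq (l+2) ⊕ ASeq (l+1)) := Fintype.card_congr (psi (l+1))
    _ = Fintype.card (ASeq (l+2)) + Fintype.card (ASeq (l+1)) := Fintype.card_sum
    _ = numComp 3 (l + 1 + 1) + numComp 3 (l + 1) := by
        rw [← Fintype.card_congr (phi (l+1)), ← Fintype.card_congr (phi l)]
        rfl
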